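/- In Euclidean space ℝⁿ, three points A, B, C are collinear if and only if (σ(A,B)+σ(A,C)−σ(B,C))² = 4·σ(A,B)·σ(A,C), where σ(P,Q) = (1/2)·‖P−Q‖². (Collinearity is expressible purely via the world function.) -/

import Mathlib

theorem stmt13 (n : ℕ) (σ : EuclideanSpace ℝ (Fin n) → EuclideanSpace ℝ (Fin n) → ℝ)
    (hσ : ∀ P Q, σ P Q = (1/2) * ‖P - Q‖ ^ 2) :
    ∀ A B C : EuclideanSpace ℝ (Fin n),
      (¬ LinearIndependent ℝ ![B - A, C - A]) ↔
        (σ A B + σ A C - σ B C) ^ 2 = 4 * σ A B * σ A C := by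
  intro A B C
  set u := B - A with hu
  set v := C - A with hv
  have hBC : B - C = u - v := by rw [hu, hv]; abel
  have hAB : A - B = -u := by rw [hu]; abel
  have hAC : A - C = -v := by rw [hv]; abel
  have h1 : σ A B = (1/2) * ‖u‖ ^ 2 := by rw [hσ, hAB, norm_neg]
  have h2 : σ A C = (1/2) * ‖v‖ ^ 2 := by rw [hσ, hAC, norm_neg]
  have h3 : σ B C = (1/2) * ‖u - v‖ ^ 2 := by rw [hσ, hBC]
  have hsub : ‖u - v‖ ^ 2 = ‖u‖ ^ 2 - 2 * inner ℝ u v + ‖v‖ ^ 2 := norm_sub_sq_real u v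
  have hsum : σ A B + σ A C - σ B C = inner ℝ u v := by rw [h1, h2, h3, hsub]; ring
  have hprod : 4 * σ A B * σ A C = ‖u‖ ^ 2 * ‖v‖ ^ 2 := by rw [h1, h2]; ring
  rw [hsum, hprod]
  have hdep : (¬ LinearIndependent ℝ ![u, v]) ↔ (v = 0 ∨ ∃ r : ℝ, u = r • v) := by
    rw [linearIndependent_fin2]
    simp only [Matrix.cons_val_one, Matrix.head_cons, Matrix.cons_val_zero]
    constructor
    · intro h
      rcases not_and_or.1 h with h | h
      · exact Or.inl (not_not.1 h)
      · push_neg at h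
        obtain ⟨a, ha⟩ := h
        exact Or.inr ⟨a, ha.symm⟩
    · rintro (h | ⟨r, hr⟩) ⟨hne, hall⟩
      · exact hne h
      · exact hall r hr.symm
  have htfae : ‖(inner ℝ v u : ℝ)‖ = ‖v‖ * ‖u‖ ↔ (v = 0 ∨ ∃ r : ℝ, u = r • v) :=
    (norm_inner_eq_norm_tfae (𝕜 := ℝ) v u).out 0 2
  have hic : (inner ℝ v u : ℝ) = inner ℝ u v := real_inner_comm u v
  rw [hdep, ← htfae, hic, Real.norm_eq_abs]
  have hnn : (0:ℝ) ≤ ‖v‖ * ‖u‖ := mul_nonneg (norm_nonneg v) (norm_nonneg u)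
  have hr : ‖u‖ ^ 2 * ‖v‖ ^ 2 = (‖v‖ * ‖u‖) ^ 2 := by ring
  rw [hr, sq_eq_sq_iff_abs_eq_abs, abs_of_nonneg hnn]
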